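/- If G is a simple graph on n vertices that contains no path on k vertices as a subgraph (k ≥ 3), then the number of edges of G is at most (k-2)n/2, with equality if and only if G is a disjoint union of copies of the complete graph K_{k-1}. -/

import Mathlib

open SimpleGraph Finset

attribute [local instance] Classical.propDecidable

noncomputable def signlessLaplacian {V : Type*} [Fintype V] [DecidableEq V] (G : SimpleGraph V) : Matrix V V ℝ :=
  Matrix.diagonal (fun v => (G.degree v : ℝ)) + G.adjMatrix ℝ

/-- The signless Laplacian spectral radius: the largest (real) eigenvalue of Q(G). -/
noncomputable def qspec {V : Type*} [Fintype V] [DecidableEq V] (G : SimpleGraph V) : ℝ :=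
  sSup {μ : ℝ | ∃ x : V → ℝ, x ≠ 0 ∧ (signlessLaplacian G).mulVec x = μ • x}

/-- `S_{n,t}`: the join of a clique on the first `t` vertices with an independent set. -/
def Snt (n t : ℕ) : SimpleGraph (Fin n) :=
  SimpleGraph.fromRel (fun i j => (i : ℕ) < t ∨ (j : ℕ) < t)

/-- `G` contains a copy of `H` as a subgraph. -/
def Contains {W V : Type*} (H : SimpleGraph W) (G : SimpleGraph V) : Prop :=
  ∃ f : H →g G, Function.Injective f

/-- `G` contains vertex-disjoint paths on `2 * a i` vertices, for `i : Fin k`. -/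
def ContainsDisjPaths {V : Type*} (G : SimpleGraph V) {k : ℕ} (a : Fin k → ℕ) : Prop :=
  ∃ f : ∀ i : Fin k, Fin (2 * a i) → V,
    (∀ i, Function.Injective (f i)) ∧
    (∀ i j, i ≠ j → ∀ x y, f i x ≠ f j y) ∧
    (∀ i x y, (SimpleGraph.pathGraph (2 * a i)).Adj x y → G.Adj (f i x) (f i y))

universe u
variable {V : Type u}

/-- a path on `l` vertices in `G`, as an injective map from `Fin l`. -/
def IsPathOn (G : SimpleGraph V) (l : ℕ) (f : Fin l → V) : Prop :=
  Function.Injective f ∧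
    ∀ i : ℕ, (h : i + 1 < l) → G.Adj (f ⟨i, Nat.lt_of_succ_lt h⟩) (f ⟨i + 1, h⟩)

lemma contains_of_isPathOn {G : SimpleGraph V} {l : ℕ} {f : Fin l → V}
    (hf : IsPathOn G l f) : Contains (SimpleGraph.pathGraph l) G := by
  refine ⟨⟨f, ?_⟩, hf.1⟩
  intro a b hab
  rw [SimpleGraph.pathGraph_adj] at hab
  rcases hab with h | h
  · have := hf.2 a.val (by omega)
    convert this using 2 <;> apply Fin.ext <;> simp [← h]
  · have := (hf.2 b.val (by omega)).symm
    convert this using 2 <;> apply Fin.ext <;> simp [← h]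

lemma isPathOn_le_card [Fintype V] {G : SimpleGraph V} {l : ℕ} {f : Fin l → V}
    (hf : IsPathOn G l f) : l ≤ Fintype.card V := by
  simpa using Fintype.card_le_of_injective f hf.1

lemma not_contains_induce {W : Type*} {H : SimpleGraph W} {G : SimpleGraph V} {s : Set V}
    (h : ¬ Contains H G) : ¬ Contains H (G.induce s) := by
  rintro ⟨f, hf⟩
  exact h ⟨(SimpleGraph.Embedding.induce s).toHom.comp f,
    Subtype.val_injective.comp hf⟩

def Closed (G : SimpleGraph V) (s : Set V) : Prop := ∀ u v, u ∈ s → G.Adj u v → v ∈ s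

lemma Closed.compl {G : SimpleGraph V} {s : Set V} (hs : Closed G s) : Closed G sᶜ := by
  intro u v hu huv hv
  exact hu (hs v u hv huv.symm)

lemma degree_induce [Fintype V] (G : SimpleGraph V) (s : Set V) {v : V} (hv : v ∈ s) :
    (G.induce s).degree ⟨v, hv⟩ = ((G.neighborFinset v).filter (fun u => u ∈ s)).card := by
  unfold SimpleGraph.degree
  refine Finset.card_bij (fun u _ => (u : V)) ?_ ?_ ?_
  · intro a ha
    simp only [SimpleGraph.mem_neighborFinset, Finset.mem_filter, comap_adj,
      Function.Embedding.coe_subtype] at ha ⊢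
    exact ⟨ha, a.2⟩
  · intro a _ b _ h; exact Subtype.ext h
  · intro b hb
    simp only [SimpleGraph.mem_neighborFinset, Finset.mem_filter] at hb
    exact ⟨⟨b, hb.2⟩, by simp [SimpleGraph.mem_neighborFinset, hb.1], rfl⟩

lemma degree_induce_closed [Fintype V] {G : SimpleGraph V} {s : Set V} (hs : Closed G s)
    {v : V} (hv : v ∈ s) : (G.induce s).degree ⟨v, hv⟩ = G.degree v := by
  rw [degree_induce]
  congr 1
  apply Finset.filter_true_of_mem
  intro u hu
  exact hs v u hv (by rwa [SimpleGraph.mem_neighborFinset] at hu)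

lemma edge_split [Fintype V] (G : SimpleGraph V) {s : Set V} (hs : Closed G s) :
    2 * G.edgeFinset.card = 2 * (G.induce s).edgeFinset.card + 2 * (G.induce sᶜ).edgeFinset.card := by
  rw [← SimpleGraph.sum_degrees_eq_twice_card_edges, ← SimpleGraph.sum_degrees_eq_twice_card_edges,
    ← SimpleGraph.sum_degrees_eq_twice_card_edges]
  rw [← Fintype.sum_equiv (Equiv.Set.sumCompl s) _ (fun v => G.degree v) (fun x => rfl)]
  rw [Fintype.sum_sum_type]
  congr 1
  · refine Finset.sum_congr rfl fun x _ => ?_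
    rw [Equiv.Set.sumCompl_apply_inl]
    exact (degree_induce_closed hs x.2).symm
  · refine Finset.sum_congr rfl fun x _ => ?_
    rw [Equiv.Set.sumCompl_apply_inr]
    have h2 := (degree_induce_closed hs.compl x.2).symm
    convert h2 using 2

lemma card_set_split [Fintype V] (s : Set V) :
    Fintype.card s + Fintype.card (sᶜ : Set V) = Fintype.card V := by
  rw [← Fintype.card_sum]
  exact Fintype.card_congr (Equiv.Set.sumCompl s)

lemma degree_induce_ne [Fintype V] (G : SimpleGraph V) (v : V) {u : V}
    (hu : u ∈ ({v}ᶜ : Set V)) :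
    (G.induce {v}ᶜ).degree ⟨u, hu⟩ + (if G.Adj u v then 1 else 0) = G.degree u := by
  have hcard : (G.induce {v}ᶜ).degree ⟨u, hu⟩ = ((G.neighborFinset u).erase v).card := by
    unfold SimpleGraph.degree
    refine Finset.card_bij (fun w _ => (w : V)) ?_ ?_ ?_
    · intro a ha
      simp only [SimpleGraph.mem_neighborFinset, Finset.mem_erase, comap_adj,
        Function.Embedding.coe_subtype] at ha ⊢
      exact ⟨a.2, ha⟩
    · intro a _ b _ h; exact Subtype.ext h
    · intro b hb
      simp only [Finset.mem_erase, SimpleGraph.mem_neighborFinset] at hb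
      exact ⟨⟨b, by simp [hb.1]⟩, by simp [SimpleGraph.mem_neighborFinset, hb.2], rfl⟩
  rw [hcard]
  by_cases h : G.Adj u v
  · rw [if_pos h, Finset.card_erase_of_mem (by rwa [SimpleGraph.mem_neighborFinset])]
    have : 1 ≤ (G.neighborFinset u).card :=
      Finset.card_pos.2 ⟨v, by rwa [SimpleGraph.mem_neighborFinset]⟩
    unfold SimpleGraph.degree
    omega
  · rw [if_neg h, Finset.erase_eq_of_notMem (by rwa [SimpleGraph.mem_neighborFinset]), add_zero]
    rfl

lemma edge_remove [Fintype V] (G : SimpleGraph V) (v : V) :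
    2 * G.edgeFinset.card = 2 * (G.induce {v}ᶜ).edgeFinset.card + 2 * G.degree v := by
  rw [← SimpleGraph.sum_degrees_eq_twice_card_edges, ← SimpleGraph.sum_degrees_eq_twice_card_edges]
  have h1 : ∑ u : V, G.degree u = ∑ u : ({v}ᶜ : Set V), G.degree ↑u + G.degree v := by
    rw [← Finset.sum_erase_add _ _ (Finset.mem_univ v)]
    congr 1
    rw [Finset.sum_subtype (p := fun x => x ∈ ({v}ᶜ : Set V)) (Finset.univ.erase v)
      (fun x => by simp) (fun x => G.degree x)]
  have h2 : ∀ u : ({v}ᶜ : Set V),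
      G.degree (u : V) = (G.induce {v}ᶜ).degree u + (if G.Adj ↑u v then 1 else 0) :=
    fun u => (degree_induce_ne G v u.2).symm
  have h3 : ∑ u : ({v}ᶜ : Set V), (if G.Adj ↑u v then 1 else 0) = G.degree v := by
    rw [Finset.sum_boole]
    push_cast
    refine Finset.card_bij (fun u _ => (u : V)) ?_ ?_ ?_
    · intro a ha
      simp only [Finset.mem_filter] at ha
      rw [SimpleGraph.mem_neighborFinset]
      exact ha.2.symm
    · intro a _ b _ h; exact Subtype.ext h
    · intro b hb
      rw [SimpleGraph.mem_neighborFinset] at hb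
      exact ⟨⟨b, by simp [hb.ne']⟩, by simp [hb.symm], rfl⟩
  rw [h1, Finset.sum_congr rfl (fun u _ => h2 u), Finset.sum_add_distrib, h3]
  ring

def StructK (k : ℕ) (G : SimpleGraph V) : Prop :=
  ∃ (m : ℕ) (e : V ≃ Fin m × Fin (k - 1)),
    ∀ u v : V, G.Adj u v ↔ (e u).1 = (e v).1 ∧ e u ≠ e v

lemma structK_degree [Fintype V] {G : SimpleGraph V} {m : ℕ}
    (e : V ≃ Fin m × Fin (k - 1))
    (he : ∀ u v : V, G.Adj u v ↔ (e u).1 = (e v).1 ∧ e u ≠ e v) (v : V) :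
    G.degree v = k - 2 := by
  have : G.degree v = (Finset.univ.erase ((e v).2)).card := by
    unfold SimpleGraph.degree
    refine Finset.card_bij (fun u _ => (e u).2) ?_ ?_ ?_
    · intro a ha
      rw [SimpleGraph.mem_neighborFinset, he] at ha
      rw [Finset.mem_erase]
      exact ⟨fun hc => ha.2 (Prod.ext ha.1 hc.symm), Finset.mem_univ _⟩
    · intro a ha b hb hab
      rw [SimpleGraph.mem_neighborFinset, he] at ha hb
      have : e a = e b := Prod.ext (ha.1.symm.trans hb.1) hab
      exact e.injective this
    · intro b hb
      rw [Finset.mem_erase] at hb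
      refine ⟨e.symm ((e v).1, b), ?_, by simp⟩
      rw [SimpleGraph.mem_neighborFinset, he]
      rw [Equiv.apply_symm_apply]
      exact ⟨rfl, fun hc => hb.1 (by simpa using (congrArg Prod.snd hc).symm)⟩
  rw [this, Finset.card_erase_of_mem (Finset.mem_univ _)]
  simp only [Finset.card_univ, Fintype.card_fin]
  omega

lemma structK_edges [Fintype V] {G : SimpleGraph V} (h : StructK k G) :
    2 * G.edgeFinset.card = (k - 2) * Fintype.card V := by
  obtain ⟨m, e, he⟩ := h
  rw [← SimpleGraph.sum_degrees_eq_twice_card_edges]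
  rw [Finset.sum_congr rfl (fun v _ => structK_degree e he v)]
  simp [mul_comm]

lemma structK_empty [Fintype V] {G : SimpleGraph V} (h : Fintype.card V = 0) (hk : 3 ≤ k) :
    StructK k G := by
  have : IsEmpty V := Fintype.card_eq_zero_iff.mp h
  exact ⟨0, Equiv.equivOfIsEmpty _ _, fun u v => isEmptyElim u⟩

lemma structK_complete [Fintype V] {G : SimpleGraph V} (h : Fintype.card V = k - 1)
    (hc : ∀ u v : V, u ≠ v → G.Adj u v) : StructK k G := by
  have e0 : V ≃ Fin (k - 1) := Fintype.equivFinOfCardEq h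
  refine ⟨1, e0.trans (Equiv.uniqueProd (Fin (k - 1)) (Fin 1)).symm, fun u v => ?_⟩
  constructor
  · intro h'
    refine ⟨Subsingleton.elim _ _, fun hc => h'.ne (by
      have := congrArg (e0.trans (Equiv.uniqueProd (Fin (k-1)) (Fin 1)).symm).symm hc
      simpa using this)⟩
  · rintro ⟨-, hne⟩
    refine hc u v (fun hc' => hne (by rw [hc']))

lemma structK_glue [Fintype V] {G : SimpleGraph V} {s : Set V} (hs : Closed G s)
    (h1 : StructK k (G.induce s)) (h2 : StructK k (G.induce sᶜ)) : StructK k G := by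
  classical
  obtain ⟨m1, e1, he1⟩ := h1
  obtain ⟨m2, e2, he2⟩ := h2
  set E : V ≃ Fin (m1 + m2) × Fin (k - 1) :=
    (Equiv.Set.sumCompl s).symm.trans ((e1.sumCongr e2).trans
      ((Equiv.sumProdDistrib (Fin m1) (Fin m2) (Fin (k - 1))).symm.trans
        (Equiv.prodCongr finSumFinEquiv (Equiv.refl (Fin (k - 1)))))) with hE
  have keyIn : ∀ (u : V) (hu : u ∈ s),
      E u = (Fin.castAdd m2 (e1 ⟨u, hu⟩).1, (e1 ⟨u, hu⟩).2) := by
    intro u hu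
    simp only [hE, Equiv.trans_apply, Equiv.Set.sumCompl_symm_apply_of_mem hu,
      Equiv.sumCongr_apply, Sum.map_inl, Equiv.sumProdDistrib_symm_apply_left,
      Equiv.prodCongr_apply, Prod.map, finSumFinEquiv_apply_left, Equiv.refl_apply]
  have keyOut : ∀ (u : V) (hu : u ∉ s),
      E u = (Fin.natAdd m1 (e2 ⟨u, hu⟩).1, (e2 ⟨u, hu⟩).2) := by
    intro u hu
    simp only [hE, Equiv.trans_apply, Equiv.Set.sumCompl_symm_apply_of_notMem hu,
      Equiv.sumCongr_apply, Sum.map_inr, Equiv.sumProdDistrib_symm_apply_right,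
      Equiv.prodCongr_apply, Prod.map, finSumFinEquiv_apply_right, Equiv.refl_apply]
  refine ⟨m1 + m2, E, fun u v => ?_⟩
  by_cases hu : u ∈ s <;> by_cases hv : v ∈ s
  · rw [keyIn u hu, keyIn v hv]
    have := he1 ⟨u, hu⟩ ⟨v, hv⟩
    simp only [comap_adj, Function.Embedding.coe_subtype] at this
    rw [this]
    constructor
    · rintro ⟨h1', h2'⟩
      refine ⟨by rw [h1'], fun hc => h2' ?_⟩
      rw [Prod.ext_iff] at hc
      refine Prod.ext ?_ hc.2
      have := congrArg Fin.val hc.1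
      simp only [Fin.coe_castAdd] at this
      exact Fin.ext this
    · rintro ⟨h1', h2'⟩
      have hv1 : (e1 ⟨u, hu⟩).1 = (e1 ⟨v, hv⟩).1 := by
        have := congrArg Fin.val h1'
        simp only [Fin.coe_castAdd] at this
        exact Fin.ext this
      exact ⟨hv1, fun hc => h2' (by rw [hc])⟩
  · constructor
    · intro hadj
      exact absurd (hs u v hu hadj) hv
    · rintro ⟨h1', -⟩
      exfalso
      rw [keyIn u hu, keyOut v hv] at h1'
      have := congrArg Fin.val h1'
      simp only [Fin.coe_castAdd, Fin.coe_natAdd] at this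
      have := ((e1 ⟨u, hu⟩).1).isLt
      omega
  · constructor
    · intro hadj
      exact absurd (hs v u hv hadj.symm) hu
    · rintro ⟨h1', -⟩
      exfalso
      rw [keyOut u hu, keyIn v hv] at h1'
      have := congrArg Fin.val h1'
      simp only [Fin.coe_castAdd, Fin.coe_natAdd] at this
      have := ((e1 ⟨v, hv⟩).1).isLt
      omega
  · rw [keyOut u hu, keyOut v hv]
    have := he2 ⟨u, hu⟩ ⟨v, hv⟩
    simp only [comap_adj, Function.Embedding.coe_subtype] at this
    rw [this]
    constructor
    · rintro ⟨h1', h2'⟩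
      refine ⟨by rw [h1'], fun hc => h2' ?_⟩
      rw [Prod.ext_iff] at hc
      refine Prod.ext ?_ hc.2
      have := congrArg Fin.val hc.1
      simp only [Fin.coe_natAdd] at this
      exact Fin.ext (by omega)
    · rintro ⟨h1', h2'⟩
      have hv1 : (e2 ⟨u, hu⟩).1 = (e2 ⟨v, hv⟩).1 := by
        have := congrArg Fin.val h1'
        simp only [Fin.coe_natAdd] at this
        exact Fin.ext (by omega)
      exact ⟨hv1, fun hc => h2' (by rw [hc])⟩

lemma isPathOn_reverse {G : SimpleGraph V} {l : ℕ} {f : Fin l → V} (hf : IsPathOn G l f) :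
    IsPathOn G l (fun j => f ⟨l - 1 - (j : ℕ), by omega⟩) := by
  constructor
  · intro a b hab
    have := hf.1 hab
    have h1 := congrArg Fin.val this
    simp only at h1
    have ha := a.isLt
    have hb := b.isLt
    exact Fin.ext (by omega)
  · intro i h
    simp only
    have h2 := (hf.2 (l - 1 - (i + 1)) (by omega)).symm
    have e1 : (⟨l - 1 - (i + 1) + 1, by omega⟩ : Fin l) = ⟨l - 1 - (i : ℕ), by omega⟩ := by
      rw [Fin.mk_eq_mk]; omega
    rw [e1] at h2
    exact h2

lemma isPathOn_prepend {G : SimpleGraph V} {l : ℕ} {f : Fin l → V} (hf : IsPathOn G l f)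
    (hl : 0 < l) {y : V} (hy : y ∉ Set.range f) (hadj : G.Adj y (f ⟨0, hl⟩)) :
    IsPathOn G (l + 1) (Fin.cases y f) := by
  constructor
  · intro a b hab
    rcases Fin.eq_zero_or_eq_succ a with ha | ⟨a', ha⟩ <;>
      rcases Fin.eq_zero_or_eq_succ b with hb | ⟨b', hb⟩ <;> subst ha <;> subst hb
    · rfl
    · simp only [Fin.cases_zero, Fin.cases_succ] at hab
      exact absurd ⟨_, hab.symm⟩ hy
    · simp only [Fin.cases_zero, Fin.cases_succ] at hab
      exact absurd ⟨_, hab⟩ hy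
    · simp only [Fin.cases_succ] at hab
      rw [hf.1 hab]
  · intro i h
    simp only
    by_cases hi : i = 0
    · subst hi
      have e0 : (Fin.cases (motive := fun _ => V) y f) ⟨0, by omega⟩ = y := rfl
      have e1 : (Fin.cases (motive := fun _ => V) y f) ⟨0 + 1, h⟩ = f ⟨0, by omega⟩ :=
        Fin.cases_succ' (motive := fun _ => V) h
      rw [e0, e1]
      exact hadj
    · obtain ⟨i', rfl⟩ : ∃ i', i = i' + 1 := ⟨i - 1, by omega⟩
      have e1 : (Fin.cases (motive := fun _ => V) y f) ⟨i' + 1, by omega⟩ = f ⟨i', by omega⟩ :=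
        Fin.cases_succ' (motive := fun _ => V) (by omega)
      have e2 : (Fin.cases (motive := fun _ => V) y f) ⟨i' + 1 + 1, h⟩ = f ⟨i' + 1, by omega⟩ :=
        Fin.cases_succ' (motive := fun _ => V) h
      rw [e1, e2]
      exact hf.2 i' (by omega)

lemma isPathOn_trunc {G : SimpleGraph V} {l m : ℕ} {f : Fin l → V} (hf : IsPathOn G l f)
    (hm : m ≤ l) : IsPathOn G m (fun j => f (Fin.castLE hm j)) := by
  constructor
  · intro a b hab
    exact Fin.castLE_injective hm (hf.1 hab)
  · intro i h
    have h2 := hf.2 i (by omega)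
    exact h2

lemma base_case [Fintype V] {G : SimpleGraph V} (hk : 3 ≤ k)
    (hn : Fintype.card V ≤ k - 1) :
    2 * G.edgeFinset.card ≤ (k - 2) * Fintype.card V ∧
      (2 * G.edgeFinset.card = (k - 2) * Fintype.card V → StructK k G) := by
  set n := Fintype.card V with hn'
  have hdeg : ∀ v : V, G.degree v ≤ n - 1 := by
    intro v
    have hsub : G.neighborFinset v ⊆ Finset.univ.erase v := by
      intro u hu
      rw [Finset.mem_erase]
      exact ⟨((SimpleGraph.mem_neighborFinset _ _ _).1 hu).ne', Finset.mem_univ _⟩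
    have := Finset.card_le_card hsub
    rwa [Finset.card_erase_of_mem (Finset.mem_univ _), Finset.card_univ] at this
  have h2e : 2 * G.edgeFinset.card ≤ n * (n - 1) := by
    rw [← SimpleGraph.sum_degrees_eq_twice_card_edges]
    calc ∑ v, G.degree v ≤ ∑ _v : V, (n - 1) := Finset.sum_le_sum fun v _ => hdeg v
      _ = n * (n - 1) := by simp [Finset.card_univ, mul_comm, hn']
  have hle : n - 1 ≤ k - 2 := by omega
  refine ⟨le_trans h2e (by
    calc n * (n - 1) ≤ n * (k - 2) := Nat.mul_le_mul_left n hle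
      _ = (k - 2) * n := mul_comm _ _), ?_⟩
  intro heq
  rcases Nat.eq_zero_or_pos n with h0 | hpos
  · exact structK_empty (by omega) hk
  · have hge : n * (n - 1) ≤ (k - 2) * n := by
      calc n * (n - 1) ≤ n * (k - 2) := Nat.mul_le_mul_left n hle
        _ = (k - 2) * n := mul_comm _ _
    have heq2 : 2 * G.edgeFinset.card = n * (n - 1) := by omega
    have heq3 : n * (n - 1) = (k - 2) * n := by omega
    have hnk : n = k - 1 := by
      rw [mul_comm (k - 2) n] at heq3
      have := Nat.eq_of_mul_eq_mul_left hpos heq3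
      omega
    have hdall : ∀ v : V, G.degree v = n - 1 := by
      by_contra hc
      push_neg at hc
      obtain ⟨v, hv⟩ := hc
      have hlt : G.degree v < n - 1 := lt_of_le_of_ne (hdeg v) hv
      have : ∑ u, G.degree u < ∑ _u : V, (n - 1) :=
        Finset.sum_lt_sum (fun u _ => hdeg u) ⟨v, Finset.mem_univ v, hlt⟩
      rw [SimpleGraph.sum_degrees_eq_twice_card_edges] at this
      simp only [Finset.sum_const, Finset.card_univ, smul_eq_mul] at this
      rw [← hn'] at this
      omega
    have hcomp : ∀ u v : V, u ≠ v → G.Adj u v := by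
      intro u v huv
      have hnb : G.neighborFinset u = Finset.univ.erase u := by
        apply Finset.eq_of_subset_of_card_le
        · intro w hw
          rw [Finset.mem_erase]
          exact ⟨((SimpleGraph.mem_neighborFinset _ _ _).1 hw).ne', Finset.mem_univ _⟩
        · rw [Finset.card_erase_of_mem (Finset.mem_univ _), Finset.card_univ]
          have := hdall u
          unfold SimpleGraph.degree at this
          omega
      have : v ∈ G.neighborFinset u := by
        rw [hnb, Finset.mem_erase]
        exact ⟨huv.symm, Finset.mem_univ _⟩
      exact (SimpleGraph.mem_neighborFinset _ _ _).1 this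
    exact structK_complete (by omega) hcomp

lemma exists_longest_path [Fintype V] {G : SimpleGraph V} {v w : V} (hvw : G.Adj v w) :
    ∃ (L : ℕ) (f : Fin L → V), 2 ≤ L ∧ IsPathOn G L f ∧
      ∀ m (g : Fin m → V), IsPathOn G m g → m ≤ L := by
  classical
  set P : ℕ → Prop := fun l => ∃ f : Fin l → V, IsPathOn G l f with hPdef
  have hbound : ∀ m, P m → m ≤ Fintype.card V := fun m hm => by
    obtain ⟨f, hf⟩ := hm
    exact isPathOn_le_card hf
  have hP2 : P 2 := by
    refine ⟨fun j => if (j : ℕ) = 0 then v else w, ⟨?_, ?_⟩⟩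
    · intro a b hab
      simp only at hab
      by_cases ha : (a : ℕ) = 0 <;> by_cases hb : (b : ℕ) = 0
      · exact Fin.ext (by omega)
      · rw [if_pos ha, if_neg hb] at hab
        exact absurd hab hvw.ne
      · rw [if_neg ha, if_pos hb] at hab
        exact absurd hab.symm hvw.ne
      · have := a.isLt; have := b.isLt
        exact Fin.ext (by omega)
    · intro i h
      have hi : i = 0 := by omega
      subst hi
      have e0 : ((fun j : Fin 2 => if (j : ℕ) = 0 then v else w) ⟨0, by omega⟩) = v := by
        norm_num
      have e1 : ((fun j : Fin 2 => if (j : ℕ) = 0 then v else w) ⟨0 + 1, h⟩) = w := by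
        norm_num
      rw [e0, e1]
      exact hvw
  refine ⟨Nat.findGreatest P (Fintype.card V), ?_⟩
  have hPL : P (Nat.findGreatest P (Fintype.card V)) :=
    Nat.findGreatest_spec (hbound 2 hP2) hP2
  obtain ⟨f, hf⟩ := hPL
  exact ⟨f, Nat.le_findGreatest (hbound 2 hP2) hP2, hf,
    fun m g hg => Nat.le_findGreatest (hbound m ⟨g, hg⟩) ⟨g, hg⟩⟩

lemma endpoint_degree_count [Fintype V] {G : SimpleGraph V} {L : ℕ} {f : Fin L → V}
    (hf : IsPathOn G L f) {x : V}
    (hnb : ∀ y, G.Adj x y → y ∈ Set.range f) :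
    G.degree x = (Finset.univ.filter (fun i : Fin L => G.Adj x (f i))).card := by
  unfold SimpleGraph.degree
  refine (Finset.card_bij (fun (i : Fin L) (_ : i ∈ Finset.univ.filter
      (fun i : Fin L => G.Adj x (f i))) => f i) ?_ ?_ ?_).symm
  · intro a ha
    rw [Finset.mem_filter] at ha
    rw [SimpleGraph.mem_neighborFinset]
    exact ha.2
  · intro a _ b _ hab
    exact hf.1 hab
  · intro y hy
    rw [SimpleGraph.mem_neighborFinset] at hy
    obtain ⟨i, hi⟩ := hnb y hy
    exact ⟨i, by rw [Finset.mem_filter]; exact ⟨Finset.mem_univ _, by rwa [hi]⟩, hi⟩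

lemma exists_low_endpoint [Fintype V] {G : SimpleGraph V} {k : ℕ} (hk : 3 ≤ k)
    (hfree : ¬ Contains (SimpleGraph.pathGraph k) G)
    (hconn : ∀ s : Set V, s.Nonempty → s ≠ Set.univ → ¬ Closed G s)
    (hnk : k ≤ Fintype.card V) :
    ∃ v : V, 2 * G.degree v ≤ k - 2 := by
  classical
  have hV1 : 1 < Fintype.card V := by omega
  have hnbr : ∀ v : V, ∃ w, G.Adj v w := by
    intro v
    have hne : ({v} : Set V) ≠ Set.univ := by
      obtain ⟨u, hu⟩ := Fintype.exists_ne_of_one_lt_card hV1 v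
      intro hcontra
      have : u ∈ ({v} : Set V) := hcontra ▸ Set.mem_univ u
      exact hu this
    have := hconn {v} ⟨v, rfl⟩ hne
    unfold Closed at this
    push_neg at this
    obtain ⟨a, b, ha, hab, hb⟩ := this
    rw [Set.mem_singleton_iff] at ha
    subst ha
    exact ⟨b, hab⟩
  have hx : Nonempty V := Fintype.card_pos_iff.mp (by omega)
  obtain ⟨v0⟩ := hx
  obtain ⟨w0, hvw0⟩ := hnbr v0
  obtain ⟨L, f, hL2, hpath, hmax⟩ := exists_longest_path hvw0
  have hL0 : 0 < L := by omega
  have hLk : L ≤ k - 1 := by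
    by_contra hc
    push_neg at hc
    have hkL : k ≤ L := by omega
    have := isPathOn_trunc hpath hkL
    exact hfree (contains_of_isPathOn this)
  set x0 : V := f ⟨0, hL0⟩ with hx0
  set xl : V := f ⟨L - 1, by omega⟩ with hxl
  have hnb0 : ∀ y, G.Adj x0 y → y ∈ Set.range f := by
    intro y hy
    by_contra hyr
    have hlong := isPathOn_prepend hpath hL0 hyr hy.symm
    have := hmax (L + 1) _ hlong
    omega
  have hfr : IsPathOn G L (fun j : Fin L => f ⟨L - 1 - (j : ℕ), by omega⟩) :=
    isPathOn_reverse hpath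
  have hnbl : ∀ y, G.Adj xl y → y ∈ Set.range f := by
    intro y hy
    by_contra hyr
    have hyr' : y ∉ Set.range (fun j : Fin L => f ⟨L - 1 - (j : ℕ), by omega⟩) := by
      rintro ⟨j, hj⟩
      exact hyr ⟨_, hj⟩
    have hadj' : G.Adj y ((fun j : Fin L => f ⟨L - 1 - (j : ℕ), by omega⟩) ⟨0, hL0⟩) := by
      simp only
      have e : (⟨L - 1 - (0 : ℕ), by omega⟩ : Fin L) = ⟨L - 1, by omega⟩ := by
        rw [Fin.mk_eq_mk]; omega
      rw [e]
      exact hy.symm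
    have hlong := isPathOn_prepend hfr hL0 hyr' hadj'
    have := hmax (L + 1) _ hlong
    omega
  have hA := endpoint_degree_count hpath hnb0
  have hB := endpoint_degree_count hpath hnbl
  by_cases hsum : G.degree x0 + G.degree xl ≤ L - 1
  · rcases le_total (G.degree x0) (G.degree xl) with h | h
    · exact ⟨x0, by omega⟩
    · exact ⟨xl, by omega⟩
  exfalso
  push_neg at hsum
  -- pigeonhole
  set A : Finset (Fin L) := Finset.univ.filter (fun i : Fin L => G.Adj x0 (f i)) with hAdef
  set B : Finset (Fin L) := Finset.univ.filter (fun i : Fin L => G.Adj xl (f i)) with hBdef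
  set A' : Finset ℕ := A.image (fun i : Fin L => (i : ℕ)) with hA'def
  set B' : Finset ℕ := B.image (fun i : Fin L => (i : ℕ) + 1) with hB'def
  have hA'card : A'.card = A.card := Finset.card_image_of_injective _ Fin.val_injective
  have hB'card : B'.card = B.card := Finset.card_image_of_injective _
    (fun a b hab => Fin.ext (by omega))
  have hA'sub : A' ⊆ Finset.Icc 1 (L - 1) := by
    intro j hj
    rw [hA'def, Finset.mem_image] at hj
    obtain ⟨a, ha, rfl⟩ := hj
    rw [hAdef, Finset.mem_filter] at ha
    have hane : (a : ℕ) ≠ 0 := by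
      intro h0
      have ha' : a = ⟨0, hL0⟩ := Fin.ext h0
      rw [ha'] at ha
      exact G.irrefl ha.2
    have := a.isLt
    rw [Finset.mem_Icc]
    omega
  have hB'sub : B' ⊆ Finset.Icc 1 (L - 1) := by
    intro j hj
    rw [hB'def, Finset.mem_image] at hj
    obtain ⟨a, ha, rfl⟩ := hj
    rw [hBdef, Finset.mem_filter] at ha
    have hane : (a : ℕ) ≠ L - 1 := by
      intro h0
      have ha' : a = ⟨L - 1, by omega⟩ := Fin.ext h0
      rw [ha'] at ha
      exact G.irrefl ha.2
    have := a.isLt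
    rw [Finset.mem_Icc]
    omega
  have hunion : (A' ∪ B').card ≤ L - 1 := by
    have := Finset.card_le_card (Finset.union_subset hA'sub hB'sub)
    rwa [Nat.card_Icc, show L - 1 + 1 - 1 = L - 1 by omega] at this
  have hcui := Finset.card_union_add_card_inter A' B'
  have hs2 : A'.card + B'.card = G.degree x0 + G.degree xl := by
    rw [hA'card, hB'card, ← hA, ← hB]
  have hinter : 1 ≤ (A' ∩ B').card := by omega
  obtain ⟨i, hi⟩ := Finset.card_pos.mp (show 0 < (A' ∩ B').card by omega)
  rw [Finset.mem_inter] at hi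
  have hiIcc := hA'sub hi.1
  rw [Finset.mem_Icc] at hiIcc
  obtain ⟨a, haA, hai⟩ := Finset.mem_image.mp hi.1
  obtain ⟨b, hbB, hbi⟩ := Finset.mem_image.mp hi.2
  rw [hAdef, Finset.mem_filter] at haA
  rw [hBdef, Finset.mem_filter] at hbB
  have hxadj : G.Adj x0 (f ⟨i, by omega⟩) := by
    have : a = ⟨i, by omega⟩ := Fin.ext hai
    rw [this] at haA
    exact haA.2
  have hladj : G.Adj xl (f ⟨i - 1, by omega⟩) := by
    have : b = ⟨i - 1, by omega⟩ := Fin.ext (show (b : ℕ) = i - 1 by omega)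
    rw [this] at hbB
    exact hbB.2
  -- the cycle
  set c : ℕ → V := fun t => if h : i + t % L < L then f ⟨i + t % L, h⟩
    else f ⟨L - 1 - t % L, by omega⟩ with hcdef
  have hper : ∀ t, c (t % L) = c t := by
    intro t
    simp only [hcdef, Nat.mod_mod_of_dvd _ dvd_rfl]
  have hcv : ∀ t (ht : t < L), c t = if h : i + t < L then f ⟨i + t, h⟩
      else f ⟨L - 1 - t, by omega⟩ := by
    intro t ht
    simp only [hcdef, Nat.mod_eq_of_lt ht]
  have hcrange : ∀ t, ∃ j : Fin L, c t = f j := by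
    intro t
    rw [← hper t, hcv _ (Nat.mod_lt _ hL0)]
    split_ifs with h
    · exact ⟨_, rfl⟩
    · exact ⟨_, rfl⟩
  have hcinj : ∀ t1 t2, t1 < L → t2 < L → c t1 = c t2 → t1 = t2 := by
    intro t1 t2 ht1 ht2 heq
    rw [hcv t1 ht1, hcv t2 ht2] at heq
    split_ifs at heq with h1 h2 h2 <;>
      · have := congrArg Fin.val (hpath.1 heq)
        simp only at this
        omega
  have hstep : ∀ s, s < L → G.Adj (c s) (c ((s + 1) % L)) := by
    intro s hs
    by_cases hsL : s + 1 = L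
    · have h0 : (s + 1) % L = 0 := by rw [hsL]; exact Nat.mod_self L
      rw [h0, hcv s hs, hcv 0 hL0]
      rw [dif_neg (by omega), dif_pos (by omega)]
      have e1 : (⟨L - 1 - s, by omega⟩ : Fin L) = ⟨0, hL0⟩ := by
        rw [Fin.mk_eq_mk]; omega
      have e2 : (⟨i + 0, by omega⟩ : Fin L) = ⟨i, by omega⟩ := by
        rw [Fin.mk_eq_mk]; omega
      rw [e1, e2]
      exact hxadj
    · have h1 : (s + 1) % L = s + 1 := Nat.mod_eq_of_lt (by omega)
      rw [h1, hcv s hs, hcv (s + 1) (by omega)]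
      split_ifs with ha hb hb
      · exact hpath.2 (i + s) hb
      · have e1 : (⟨i + s, ha⟩ : Fin L) = ⟨L - 1, by omega⟩ := by
          rw [Fin.mk_eq_mk]; omega
        have e2 : (⟨L - 1 - (s + 1), by omega⟩ : Fin L) = ⟨i - 1, by omega⟩ := by
          rw [Fin.mk_eq_mk]; omega
        rw [e1, e2]
        exact hladj
      · omega
      · have h2 := (hpath.2 (L - 1 - (s + 1)) (by omega)).symm
        have e1 : (⟨L - 1 - (s + 1) + 1, by omega⟩ : Fin L) = ⟨L - 1 - s, by omega⟩ := by
          rw [Fin.mk_eq_mk]; omega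
        rw [e1] at h2
        exact h2
  have hadjc : ∀ t, G.Adj (c t) (c (t + 1)) := by
    intro t
    rw [← hper t, ← hper (t + 1)]
    have e : (t + 1) % L = (t % L + 1) % L := by
      conv_lhs => rw [Nat.add_mod]
      rw [Nat.mod_eq_of_lt (show 1 < L by omega)]
    rw [e, hper ((t % L + 1))]
    rw [← hper (t % L + 1)]
    exact hstep (t % L) (Nat.mod_lt _ hL0)
  have hcov : ∀ (j : ℕ) (hj : j < L), ∃ t, t < L ∧ c t = f ⟨j, hj⟩ := by
    intro j hj
    by_cases hij : i ≤ j
    · refine ⟨j - i, by omega, ?_⟩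
      rw [hcv _ (by omega), dif_pos (by omega)]
      have e : (⟨i + (j - i), by omega⟩ : Fin L) = ⟨j, hj⟩ := by
        rw [Fin.mk_eq_mk]; omega
      rw [e]
    · refine ⟨L - 1 - j, by omega, ?_⟩
      rw [hcv _ (by omega), dif_neg (by omega)]
      have e : (⟨L - 1 - (L - 1 - j), by omega⟩ : Fin L) = ⟨j, hj⟩ := by
        rw [Fin.mk_eq_mk]; omega
      rw [e]
  -- crossing edge
  have hrange_ne : Set.range f ≠ Set.univ := by
    intro hcontra
    have hsurj : Function.Surjective f := Set.range_eq_univ.mp hcontra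
    have := Fintype.card_le_of_surjective f hsurj
    simp only [Fintype.card_fin] at this
    omega
  have hnotclosed := hconn (Set.range f) ⟨x0, ⟨0, hL0⟩, rfl⟩ hrange_ne
  unfold Closed at hnotclosed
  push_neg at hnotclosed
  obtain ⟨u, w, hu, huw, hw⟩ := hnotclosed
  obtain ⟨j, hj⟩ := hu
  obtain ⟨t0, ht0L, ht0⟩ := hcov j.val j.isLt
  set p : Fin L → V := fun s => c (t0 + (s : ℕ)) with hpdef
  have hppath : IsPathOn G L p := by
    constructor
    · intro a1 b1 hab
      have h1 : (t0 + (a1 : ℕ)) % L = (t0 + (b1 : ℕ)) % L := by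
        apply hcinj _ _ (Nat.mod_lt _ hL0) (Nat.mod_lt _ hL0)
        rw [hper, hper]
        exact hab
      have h2 : (a1 : ℕ) % L = (b1 : ℕ) % L := Nat.ModEq.add_left_cancel' t0 h1
      have ha1 := a1.isLt
      have hb1 := b1.isLt
      rw [Nat.mod_eq_of_lt ha1, Nat.mod_eq_of_lt hb1] at h2
      exact Fin.ext h2
    · intro s hs
      exact hadjc (t0 + s)
  have hrangep : ∀ y, y ∈ Set.range p → y ∈ Set.range f := by
    rintro y ⟨s, rfl⟩
    obtain ⟨j', hj'⟩ := hcrange (t0 + (s : ℕ))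
    exact ⟨j', hj'.symm⟩
  have hp0 : p ⟨0, hL0⟩ = u := by
    have : p ⟨0, hL0⟩ = c t0 := rfl
    rw [this, ht0]
    have : f ⟨(j : ℕ), j.isLt⟩ = f j := rfl
    rw [this, hj]
  have hwp : w ∉ Set.range p := fun hmem => hw (hrangep w hmem)
  have hwadj : G.Adj w (p ⟨0, hL0⟩) := by rw [hp0]; exact huw.symm
  have hlong := isPathOn_prepend hppath hL0 hwp hwadj
  have := hmax (L + 1) _ hlong
  omega

lemma EG_main {k : ℕ} (hk : 3 ≤ k) :
    ∀ (n : ℕ) (V : Type u) [Fintype V], Fintype.card V = n →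
      ∀ G : SimpleGraph V, ¬ Contains (SimpleGraph.pathGraph k) G →
        2 * G.edgeFinset.card ≤ (k - 2) * n ∧
          (2 * G.edgeFinset.card = (k - 2) * n → StructK k G) := by
  intro n
  induction n using Nat.strong_induction_on with
  | _ n IH =>
    intro V instV hcard G hfree
    by_cases hbase : n ≤ k - 1
    · have hb := base_case (G := G) hk (by omega)
      rw [hcard] at hb
      exact hb
    · push_neg at hbase
      have hnk : k ≤ n := by omega
      by_cases hsplit : ∃ s : Set V, s.Nonempty ∧ s ≠ Set.univ ∧ Closed G s
      · obtain ⟨s, hne, hproper, hclosed⟩ := hsplit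
        have hcs : Fintype.card s + Fintype.card (sᶜ : Set V) = n := by
          rw [card_set_split s]; exact hcard
        have hs1 : 1 ≤ Fintype.card s := Fintype.card_pos_iff.mpr hne.to_subtype
        have hsc1 : 1 ≤ Fintype.card (sᶜ : Set V) := by
          obtain ⟨x, hx⟩ := (Set.ne_univ_iff_exists_notMem s).mp hproper
          exact Fintype.card_pos_iff.mpr ⟨⟨x, hx⟩⟩
        have H1 := IH (Fintype.card s) (by omega) s rfl (G.induce s)
          (not_contains_induce hfree)
        have H2 := IH (Fintype.card (sᶜ : Set V)) (by omega) (sᶜ : Set V) rfl (G.induce sᶜ)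
          (not_contains_induce hfree)
        have hse := edge_split G hclosed
        have hsum : (k - 2) * Fintype.card s + (k - 2) * Fintype.card (sᶜ : Set V)
            = (k - 2) * n := by
          rw [← Nat.mul_add, hcs]
        constructor
        · have : 2 * (G.induce s).edgeFinset.card ≤ (k - 2) * Fintype.card s := by convert H1.1
          have : 2 * (G.induce sᶜ).edgeFinset.card ≤ (k - 2) * Fintype.card (sᶜ : Set V) := by convert H2.1
          omega
        · intro heq
          have e1 : 2 * (G.induce s).edgeFinset.card = (k - 2) * Fintype.card s := by
            have : 2 * (G.induce s).edgeFinset.card ≤ (k - 2) * Fintype.card s := by convert H1.1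
            have : 2 * (G.induce sᶜ).edgeFinset.card ≤ (k - 2) * Fintype.card (sᶜ : Set V) := by convert H2.1
            omega
          have e2 : 2 * (G.induce sᶜ).edgeFinset.card
              = (k - 2) * Fintype.card (sᶜ : Set V) := by
            have : 2 * (G.induce s).edgeFinset.card ≤ (k - 2) * Fintype.card s := by convert H1.1
            have : 2 * (G.induce sᶜ).edgeFinset.card ≤ (k - 2) * Fintype.card (sᶜ : Set V) := by convert H2.1
            omega
          exact structK_glue hclosed (H1.2 e1) (H2.2 e2)
      · push_neg at hsplit
        have hconn : ∀ s : Set V, s.Nonempty → s ≠ Set.univ → ¬ Closed G s := hsplit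
        obtain ⟨v, hv⟩ := exists_low_endpoint hk hfree hconn (by omega)
        have hcards : Fintype.card ({v}ᶜ : Set V) = n - 1 := by
          rw [← hcard, Fintype.card_compl_set]
          simp
        have H1 := IH (n - 1) (by omega) ({v}ᶜ : Set V) hcards (G.induce {v}ᶜ)
          (not_contains_induce hfree)
        have hrem := edge_remove G v
        have hmul : (k - 2) * (n - 1) + (k - 2) = (k - 2) * n := by
          have h3 : n - 1 + 1 = n := by omega
          calc (k - 2) * (n - 1) + (k - 2) = (k - 2) * (n - 1 + 1) := by ring
            _ = (k - 2) * n := by rw [h3]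
        constructor
        · calc 2 * G.edgeFinset.card
              = 2 * (G.induce {v}ᶜ).edgeFinset.card + 2 * G.degree v := hrem
            _ ≤ (k - 2) * (n - 1) + (k - 2) := Nat.add_le_add H1.1 hv
            _ = (k - 2) * n := hmul
        · intro heq
          exfalso
          have heq2 : 2 * (G.induce {v}ᶜ).edgeFinset.card + 2 * G.degree v
              = (k - 2) * (n - 1) + (k - 2) := by
            rw [← hrem, heq, ← hmul]
          have hpair : 2 * (G.induce {v}ᶜ).edgeFinset.card = (k - 2) * (n - 1) ∧
              2 * G.degree v = k - 2 := by
            have h1 : 2 * (G.induce {v}ᶜ).edgeFinset.card ≤ (k - 2) * (n - 1) := by convert H1.1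
            have h2 := hv
            generalize hP : (k - 2) * (n - 1) = P at h1 heq2 ⊢
            constructor <;> omega
          have hdeg_eq : 2 * G.degree v = k - 2 := hpair.2
          have he' : 2 * (G.induce ({v}ᶜ : Set V)).edgeFinset.card = (k - 2) * (n - 1) :=
            hpair.1
          obtain ⟨m, E, hE⟩ := H1.2 he'
          have hdegpos : 0 < G.degree v := by omega
          obtain ⟨w, hw⟩ : ∃ w, G.Adj v w := by
            obtain ⟨w, hw⟩ := Finset.card_pos.mp hdegpos
            exact ⟨w, (SimpleGraph.mem_neighborFinset _ _ _).1 hw⟩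
          have hwv : w ∈ ({v}ᶜ : Set V) := by simp [hw.ne']
          set w' : ({v}ᶜ : Set V) := ⟨w, hwv⟩ with hw'def
          set b : Fin m := (E w').1 with hbdef
          set σ : Fin (k - 1) ≃ Fin (k - 1) := Equiv.swap ⟨0, by omega⟩ (E w').2 with hσdef
          set g : Fin k → V := fun j => if h0 : (j : ℕ) = 0 then v
            else ↑(E.symm (b, σ ⟨(j : ℕ) - 1, by have := j.isLt; omega⟩)) with hgdef
          have hgs : ∀ (a : ℕ) (ha : a + 1 < k),
              g ⟨a + 1, ha⟩ = ↑(E.symm (b, σ ⟨a, by omega⟩)) := fun a ha => rfl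
          have hg1 : g ⟨1, by omega⟩ = w := by
            have h1 := hgs 0 (by omega)
            rw [h1]
            have h2 : σ ⟨0, by omega⟩ = (E w').2 := Equiv.swap_apply_left _ _
            rw [h2]
            have h3 : (b, (E w').2) = E w' := rfl
            rw [h3, Equiv.symm_apply_apply]
          have hg0 : ∀ (h0 : 0 < k), g ⟨0, h0⟩ = v := fun _ => rfl
          have hginj : Function.Injective g := by
            intro a1 a2 hab
            rcases a1 with ⟨x1, hx1⟩
            rcases a2 with ⟨x2, hx2⟩
            by_cases h1 : x1 = 0 <;> by_cases h2 : x2 = 0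
            · subst h1; subst h2; rfl
            · exfalso
              obtain ⟨t2, rfl⟩ : ∃ t, x2 = t + 1 := ⟨x2 - 1, by omega⟩
              subst h1
              have hv1 : g ⟨0, hx1⟩ = v := hg0 hx1
              have hv2 : g ⟨t2 + 1, hx2⟩ = ↑(E.symm (b, σ ⟨t2, by omega⟩)) := hgs t2 hx2
              have hab2 : v = ↑(E.symm (b, σ ⟨t2, by omega⟩)) :=
                hv1.symm.trans (hab.trans hv2)
              exact (E.symm (b, σ ⟨t2, by omega⟩)).2 hab2.symm
            · exfalso
              obtain ⟨t1, rfl⟩ : ∃ t, x1 = t + 1 := ⟨x1 - 1, by omega⟩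
              subst h2
              have hv1 : g ⟨t1 + 1, hx1⟩ = ↑(E.symm (b, σ ⟨t1, by omega⟩)) := hgs t1 hx1
              have hv2 : g ⟨0, hx2⟩ = v := hg0 hx2
              have hab2 : v = ↑(E.symm (b, σ ⟨t1, by omega⟩)) :=
                hv2.symm.trans (hab.symm.trans hv1)
              exact (E.symm (b, σ ⟨t1, by omega⟩)).2 hab2.symm
            · obtain ⟨t1, rfl⟩ : ∃ t, x1 = t + 1 := ⟨x1 - 1, by omega⟩
              obtain ⟨t2, rfl⟩ : ∃ t, x2 = t + 1 := ⟨x2 - 1, by omega⟩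
              have hv1 : g ⟨t1 + 1, hx1⟩ = ↑(E.symm (b, σ ⟨t1, by omega⟩)) := hgs t1 hx1
              have hv2 : g ⟨t2 + 1, hx2⟩ = ↑(E.symm (b, σ ⟨t2, by omega⟩)) := hgs t2 hx2
              have hab2 : (↑(E.symm (b, σ ⟨t1, by omega⟩)) : V)
                  = ↑(E.symm (b, σ ⟨t2, by omega⟩)) := hv1.symm.trans (hab.trans hv2)
              have h3 := E.symm.injective (Subtype.coe_injective hab2)
              have h4 := congrArg Prod.snd h3
              simp only at h4
              have h5 := σ.injective h4
              rw [Fin.mk_eq_mk] at h5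
              rw [Fin.mk_eq_mk]
              omega
          have hgadj : ∀ i : ℕ, (h : i + 1 < k) →
              G.Adj (g ⟨i, Nat.lt_of_succ_lt h⟩) (g ⟨i + 1, h⟩) := by
            intro i hi
            by_cases hi0 : i = 0
            · subst hi0
              have e1 : g ⟨0, Nat.lt_of_succ_lt hi⟩ = v := hg0 (by omega)
              have e2 : g ⟨0 + 1, hi⟩ = w := hg1
              rw [e1, e2]
              exact hw
            · obtain ⟨i', rfl⟩ : ∃ i', i = i' + 1 := ⟨i - 1, by omega⟩
              rw [hgs i' (by omega), hgs (i' + 1) hi]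
              have hne : (b, σ ⟨i', by omega⟩) ≠ (b, σ ⟨i' + 1, by omega⟩) := by
                intro hcontra
                have h4 := congrArg Prod.snd hcontra
                simp only at h4
                have h5 := σ.injective h4
                rw [Fin.mk_eq_mk] at h5
                omega
              have hadj2 := (hE (E.symm (b, σ ⟨i', by omega⟩))
                  (E.symm (b, σ ⟨i' + 1, by omega⟩))).mpr ?_
              · exact hadj2
              · rw [Equiv.apply_symm_apply, Equiv.apply_symm_apply]
                exact ⟨rfl, hne⟩
          have hgpath : IsPathOn G k g := ⟨hginj, hgadj⟩
          exact hfree (contains_of_isPathOn hgpath)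

theorem erdos_gallai_path {V : Type*} [Fintype V] [DecidableEq V] (k : ℕ) (hk : 3 ≤ k)
    (G : SimpleGraph V) (hfree : ¬ Contains (SimpleGraph.pathGraph k) G) :
    2 * G.edgeFinset.card ≤ (k - 2) * Fintype.card V ∧
    (2 * G.edgeFinset.card = (k - 2) * Fintype.card V ↔
      ∃ (m : ℕ) (e : V ≃ Fin m × Fin (k - 1)),
        ∀ u v : V, G.Adj u v ↔ (e u).1 = (e v).1 ∧ e u ≠ e v) := by
  have H := EG_main hk (Fintype.card V) V rfl G hfree
  refine ⟨H.1, ?_, ?_⟩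
  · exact H.2
  · rintro ⟨m, e, he⟩
    exact structK_edges ⟨m, e, he⟩
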